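/- arXiv:2509.20921 — 4 statements merged into one kernel-verified Lean document; each statement's English description precedes it below -/
import Mathlib

section
/- For points x = (x₁,x₂) and y = (y₁,y₂) in ℝ²_≤, let T_x = {(a,b) ∈ ℝ² : x₁ ≤ a ≤ b ≤ x₂} and T_y = {(a,b) ∈ ℝ² : y₁ ≤ a ≤ b ≤ y₂}. Then the 2-dimensional Lebesgue measure of the symmetric difference T_x ∆ T_y equals ½(x₂−x₁)² + ½(y₂−y₁)² − (max(min(x₂,y₂) − max(x₁,y₁), 0))², i.e. it equals d_rk(x,y). -/
open MeasureTheory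

/-- The triangle region `T_x = {(a,b) : x₁ ≤ a ≤ b ≤ x₂}` associated to a point
`x = (x₁,x₂)` of `ℝ²_≤`. -/
def triRegion (x : ℝ × ℝ) : Set (ℝ × ℝ) :=
  {p | x.1 ≤ p.1 ∧ p.1 ≤ p.2 ∧ p.2 ≤ x.2}

/-- The rank metric `d_rk` on `ℝ²_≤`. -/
noncomputable def drk (x y : ℝ × ℝ) : ℝ :=
  (x.2 - x.1) ^ 2 / 2 + (y.2 - y.1) ^ 2 / 2 - (max (min x.2 y.2 - max x.1 y.1) 0) ^ 2

lemma triRegion_measurable (z : ℝ × ℝ) : MeasurableSet (triRegion z) := by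
  have h1 : MeasurableSet {p : ℝ × ℝ | z.1 ≤ p.1} :=
    measurableSet_le measurable_const measurable_fst
  have h2 : MeasurableSet {p : ℝ × ℝ | p.1 ≤ p.2} :=
    measurableSet_le measurable_fst measurable_snd
  have h3 : MeasurableSet {p : ℝ × ℝ | p.2 ≤ z.2} :=
    measurableSet_le measurable_snd measurable_const
  have : triRegion z = {p : ℝ × ℝ | z.1 ≤ p.1} ∩ ({p | p.1 ≤ p.2} ∩ {p | p.2 ≤ z.2}) := by
    ext p; simp [triRegion, and_assoc]
  rw [this]; exact h1.inter (h2.inter h3)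

lemma vol_tri (z : ℝ × ℝ) (hz : z.1 ≤ z.2) :
    volume (triRegion z) = ENNReal.ofReal ((z.2 - z.1) ^ 2 / 2) := by
  have hm := triRegion_measurable z
  rw [show (volume : Measure (ℝ × ℝ)) = (volume : Measure ℝ).prod volume from rfl,
    Measure.prod_apply hm]
  have hslice : ∀ a : ℝ, volume (Prod.mk a ⁻¹' triRegion z)
      = (Set.Icc z.1 z.2).indicator (fun a => ENNReal.ofReal (z.2 - a)) a := by
    intro a
    by_cases ha : z.1 ≤ a
    · have : Prod.mk a ⁻¹' triRegion z = Set.Icc a z.2 := by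
        ext b; simp [triRegion, ha]
      rw [this, Real.volume_Icc]
      by_cases ha2 : a ≤ z.2
      · rw [Set.indicator_of_mem (Set.mem_Icc.mpr ⟨ha, ha2⟩)]
      · rw [Set.indicator_of_notMem (by simp [ha2])]
        simp [ENNReal.ofReal_eq_zero]
        linarith
    · have : Prod.mk a ⁻¹' triRegion z = ∅ := by
        ext b; simp [triRegion]; intro h; exact absurd h ha
      rw [this, Set.indicator_of_notMem (by simp [ha])]
      simp
  simp_rw [hslice]
  rw [lintegral_indicator measurableSet_Icc]
  rw [← ofReal_integral_eq_lintegral_ofReal]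
  · rw [MeasureTheory.integral_Icc_eq_integral_Ioc,
      ← intervalIntegral.integral_of_le hz]
    congr 1
    have : ∫ a in z.1..z.2, (z.2 - a) = (z.2 - z.1) ^ 2 / 2 := by
      rw [intervalIntegral.integral_sub (intervalIntegrable_const) intervalIntegral.intervalIntegrable_id]
      simp [integral_id]
      ring
    rw [this]
  · exact (continuous_const.sub continuous_id).integrableOn_Icc
  · filter_upwards [ae_restrict_mem measurableSet_Icc] with a ha
    simp at ha ⊢; linarith [ha.2]

lemma tri_inter (x y : ℝ × ℝ) :
    triRegion x ∩ triRegion y = triRegion (max x.1 y.1, min x.2 y.2) := by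
  ext p
  simp only [triRegion, Set.mem_inter_iff, Set.mem_setOf_eq, max_le_iff, le_min_iff]
  constructor
  · rintro ⟨⟨h1, h2, h3⟩, ⟨h4, _, h5⟩⟩; exact ⟨⟨h1, h4⟩, h2, h3, h5⟩
  · rintro ⟨⟨h1, h4⟩, h2, h3, h5⟩; exact ⟨⟨h1, h2, h3⟩, ⟨h4, h2, h5⟩⟩

/-- The 2-dimensional Lebesgue measure of the symmetric difference `T_x ∆ T_y`
equals `d_rk(x,y) = ½(x₂−x₁)² + ½(y₂−y₁)² − (max(min(x₂,y₂) − max(x₁,y₁), 0))²`. -/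
theorem stmt0 (x y : ℝ × ℝ) (hx : x.1 ≤ x.2) (hy : y.1 ≤ y.2) :
    volume (symmDiff (triRegion x) (triRegion y)) = ENNReal.ofReal (drk x y) := by
  set A := triRegion x with hA
  set B := triRegion y with hB
  have mA := triRegion_measurable x
  have mB := triRegion_measurable y
  have vA := vol_tri x hx
  have vB := vol_tri y hy
  set a := (x.2 - x.1) ^ 2 / 2 with ha
  set b := (y.2 - y.1) ^ 2 / 2 with hb
  have ha0 : 0 ≤ a := by positivity
  have hb0 : 0 ≤ b := by positivity
  -- measure of intersection
  have hABfin : volume (A ∩ B) ≠ ⊤ := by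
    refine ne_top_of_le_ne_top ?_ (measure_mono Set.inter_subset_left)
    rw [vA]; exact ENNReal.ofReal_ne_top
  have hsymm : volume (symmDiff A B) = volume (A \ B) + volume (B \ A) := by
    rw [Set.symmDiff_def]
    exact measure_union (disjoint_sdiff_sdiff) (mB.diff mA)
  have hdAB : volume (A \ B) = volume A - volume (A ∩ B) := by
    rw [← Set.diff_self_inter]
    exact measure_diff Set.inter_subset_left (mA.inter mB).nullMeasurableSet hABfin
  have hdBA : volume (B \ A) = volume B - volume (A ∩ B) := by
    rw [Set.inter_comm] at hABfin ⊢
    rw [← Set.diff_self_inter]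
    exact measure_diff Set.inter_subset_left (mB.inter mA).nullMeasurableSet hABfin
  rw [hsymm, hdAB, hdBA, vA, vB, tri_inter]
  by_cases h : max x.1 y.1 ≤ min x.2 y.2
  · set c := (min x.2 y.2 - max x.1 y.1) ^ 2 / 2 with hc
    have hvc : volume (triRegion (max x.1 y.1, min x.2 y.2)) = ENNReal.ofReal c :=
      vol_tri _ h
    have hca : c ≤ a := by
      rw [hc, ha]
      have h1 : min x.2 y.2 - max x.1 y.1 ≤ x.2 - x.1 := by
        have := min_le_left x.2 y.2; have := le_max_left x.1 y.1; linarith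
      have h2 : 0 ≤ min x.2 y.2 - max x.1 y.1 := by linarith
      nlinarith
    have hcb : c ≤ b := by
      rw [hc, hb]
      have h1 : min x.2 y.2 - max x.1 y.1 ≤ y.2 - y.1 := by
        have := min_le_right x.2 y.2; have := le_max_right x.1 y.1; linarith
      have h2 : 0 ≤ min x.2 y.2 - max x.1 y.1 := by linarith
      nlinarith
    have hc0 : 0 ≤ c := by positivity
    rw [hvc, ← ENNReal.ofReal_sub _ hc0, ← ENNReal.ofReal_sub _ hc0,
      ← ENNReal.ofReal_add (by linarith) (by linarith)]
    congr 1
    have hmax : max (min x.2 y.2 - max x.1 y.1) 0 = min x.2 y.2 - max x.1 y.1 :=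
      max_eq_left (by linarith)
    rw [drk, hmax, ha, hb, hc]
    ring
  · have hempty : triRegion (max x.1 y.1, min x.2 y.2) = ∅ := by
      ext p
      simp only [triRegion, Set.mem_setOf_eq, Set.mem_empty_iff_false, iff_false]
      rintro ⟨h1, h2, h3⟩
      exact h (le_trans h1 (le_trans h2 h3))
    rw [hempty, measure_empty, tsub_zero, tsub_zero,
      ← ENNReal.ofReal_add ha0 hb0]
    congr 1
    have hmax : max (min x.2 y.2 - max x.1 y.1) 0 = 0 :=
      max_eq_right (by push_neg at h; linarith)
    rw [drk, hmax]
    ring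
end

section
/- Let x = (x₁,x₂) ∈ ℝ²_≤ with l = x₂ − x₁ > 0, and let 0 < r < min(l, ½l²). If 0 < r'' ≤ √(l² + 2r) − l, then every y ∈ ℝ²_≤ with d_dim(x,y) ≤ r'' satisfies d_rk(x,y) ≤ r; that is, the closed d_dim-ball of radius r'' centered at x is contained in the closed d_rk-ball of radius r centered at x. -/
/-- The dimension "distance" formula on `ℝ²_≤`. -/
noncomputable def ddim (x y : ℝ × ℝ) : ℝ :=
  (x.2 - x.1) + (y.2 - y.1) - 2 * max (min x.2 y.2 - max x.1 y.1) 0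

/-- If `0 < r < min(l, ½l²)` and `0 < r'' ≤ √(l² + 2r) − l`, then the closed
`d_dim`-ball of radius `r''` about `x` is contained in the closed `d_rk`-ball of
radius `r` about `x`. -/
theorem stmt4 (x : ℝ × ℝ) (hx : x.1 ≤ x.2) (l r r'' : ℝ) (hl : l = x.2 - x.1)
    (hlpos : 0 < l) (hr0 : 0 < r) (hr : r < min l (l ^ 2 / 2)) (hr''0 : 0 < r'')
    (hr'' : r'' ≤ Real.sqrt (l ^ 2 + 2 * r) - l) :
    ∀ y : ℝ × ℝ, y.1 ≤ y.2 → ddim x y ≤ r'' → drk x y ≤ r := by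
  intro y hy hdd
  set m := max (min x.2 y.2 - max x.1 y.1) 0 with hmdef
  have hm0 : 0 ≤ m := le_max_right _ _
  have hma : m ≤ x.2 - x.1 := by
    apply max_le _ (by linarith)
    have h1 : min x.2 y.2 ≤ x.2 := min_le_left _ _
    have h2 : x.1 ≤ max x.1 y.1 := le_max_left _ _
    linarith
  have hmb : m ≤ y.2 - y.1 := by
    apply max_le _ (by linarith)
    have h1 : min x.2 y.2 ≤ y.2 := min_le_right _ _
    have h2 : y.1 ≤ max x.1 y.1 := le_max_right _ _
    linarith
  have hle : r'' + l ≤ Real.sqrt (l ^ 2 + 2 * r) := by linarith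
  have hsq : (r'' + l) ^ 2 ≤ l ^ 2 + 2 * r := by
    have := Real.sq_sqrt (by positivity : (0:ℝ) ≤ l ^ 2 + 2 * r)
    nlinarith [Real.sqrt_nonneg (l ^ 2 + 2 * r)]
  rw [ddim] at hdd
  rw [drk]
  rw [← hmdef] at hdd ⊢
  nlinarith [mul_nonneg (sub_nonneg.2 hma) (sub_nonneg.2 hmb),
             mul_nonneg hm0 (sub_nonneg.2 hma), mul_nonneg hm0 (sub_nonneg.2 hmb)]
end

section
/- Let x = (x₁,x₂) ∈ ℝ²_≤ with l = x₂ − x₁ > 0, and let 0 < r < min(l, ½l²). If r' ≥ l − √(l² − 2r), then every y ∈ ℝ²_≤ with d_rk(x,y) ≤ r satisfies d_dim(x,y) ≤ r'; that is, the closed d_rk-ball of radius r centered at x is contained in the closed d_dim-ball of radius r' centered at x. -/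
/-- If `0 < r < min(l, ½l²)` and `r' ≥ l − √(l² − 2r)`, then the closed
`d_rk`-ball of radius `r` about `x` is contained in the closed `d_dim`-ball of
radius `r'` about `x`. -/
theorem stmt5 (x : ℝ × ℝ) (hx : x.1 ≤ x.2) (l r r' : ℝ) (hl : l = x.2 - x.1)
    (hlpos : 0 < l) (hr0 : 0 < r) (hr : r < min l (l ^ 2 / 2))
    (hr' : l - Real.sqrt (l ^ 2 - 2 * r) ≤ r') :
    ∀ y : ℝ × ℝ, y.1 ≤ y.2 → drk x y ≤ r → ddim x y ≤ r' := by
  intro y hy hdrk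
  have hr2 : r < l ^ 2 / 2 := lt_of_lt_of_le hr (min_le_right _ _)
  set a : ℝ := x.2 - x.1 with ha
  set b : ℝ := y.2 - y.1 with hb
  set m : ℝ := max (min x.2 y.2 - max x.1 y.1) 0 with hm
  have hm0 : 0 ≤ m := le_max_right _ _
  have hma : m ≤ a := by
    apply max_le
    · have h1 : min x.2 y.2 ≤ x.2 := min_le_left _ _
      have h2 : x.1 ≤ max x.1 y.1 := le_max_left _ _
      simp only [ha]; linarith
    · simp only [ha]; linarith
  have hmb : m ≤ b := by
    apply max_le
    · have h1 : min x.2 y.2 ≤ y.2 := min_le_right _ _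
      have h2 : y.1 ≤ max x.1 y.1 := le_max_right _ _
      simp only [hb]; linarith
    · simp only [hb]; linarith
  have hdrk' : a ^ 2 / 2 + b ^ 2 / 2 - m ^ 2 ≤ r := hdrk
  have hb0 : 0 ≤ b := by linarith
  have hla : l = a := hl
  -- key: b ≤ 2 m
  have hb2m : b ≤ 2 * m := by nlinarith [sq_nonneg (b - 2 * m), sq_nonneg b]
  set d : ℝ := a + b - 2 * m with hd
  have hd0 : 0 ≤ d := by simp only [hd]; linarith
  have hdl : d ≤ l := by simp only [hd]; linarith
  have hkey : d * (2 * l - d) ≤ 2 * r := by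
    have h2 : 0 ≤ (b - m) ^ 2 := sq_nonneg _
    simp only [hd, hla]; nlinarith
  have hsq : Real.sqrt (l ^ 2 - 2 * r) ≤ l - d := by
    have h1 : l ^ 2 - 2 * r ≤ (l - d) ^ 2 := by nlinarith
    calc Real.sqrt (l ^ 2 - 2 * r) ≤ Real.sqrt ((l - d) ^ 2) := Real.sqrt_le_sqrt h1
      _ = l - d := Real.sqrt_sq (by linarith)
  have hdd : ddim x y = d := rfl
  rw [hdd]
  linarith
end

section
/- For all x = (x₁,x₂) and y = (y₁,y₂) in ℝ²_≤, the integral ∫_ℝ |tent_x(t) − tent_y(t)| dt equals ½ d_rk(x,y), i.e. ∫_ℝ |max(0, min(t−x₁, x₂−t)) − max(0, min(t−y₁, y₂−t))| dt = ¼(x₂−x₁)² + ¼(y₂−y₁)² − ½ (max(min(x₂,y₂) − max(x₁,y₁), 0))². -/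
open MeasureTheory

/-- The tent function of a point `x = (x₁,x₂) ∈ ℝ²_≤`:
`tent_x(t) = max(0, min(t−x₁, x₂−t))`. -/
noncomputable def tent (x : ℝ × ℝ) (t : ℝ) : ℝ := max 0 (min (t - x.1) (x.2 - t))

lemma tent_cont (x : ℝ × ℝ) : Continuous (tent x) := by
  unfold tent; fun_prop

lemma tent_support (x : ℝ × ℝ) : ∀ t ∉ Set.Icc x.1 x.2, tent x t = 0 := by
  intro t ht
  simp only [Set.mem_Icc, not_and_or, not_le] at ht
  unfold tent
  rcases ht with h | h
  · exact max_eq_left (min_le_of_left_le (by linarith))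
  · exact max_eq_left (min_le_of_right_le (by linarith))

lemma tent_hcs (x : ℝ × ℝ) : HasCompactSupport (tent x) :=
  HasCompactSupport.intro isCompact_Icc (tent_support x)

lemma tent_integrable (x : ℝ × ℝ) : Integrable (tent x) :=
  (tent_cont x).integrable_of_hasCompactSupport (tent_hcs x)

lemma tent_integral_le {a b : ℝ} (hab : a ≤ b) :
    ∫ t, tent (a, b) t = (b - a) ^ 2 / 4 := by
  have hm1 : a ≤ (a + b) / 2 := by linarith
  have hm2 : (a + b) / 2 ≤ b := by linarith
  rw [← setIntegral_eq_integral_of_forall_compl_eq_zero (tent_support (a, b))]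
  show (∫ t in Set.Icc a b, tent (a, b) t) = (b - a) ^ 2 / 4
  rw [integral_Icc_eq_integral_Ioc, ← intervalIntegral.integral_of_le hab,
    ← intervalIntegral.integral_add_adjacent_intervals
      (b := (a + b) / 2)
      (((tent_cont (a, b)).intervalIntegrable _ _))
      (((tent_cont (a, b)).intervalIntegrable _ _))]
  have h1 : ∫ t in a..(a + b) / 2, tent (a, b) t = ∫ t in a..(a + b) / 2, (t - a) := by
    apply intervalIntegral.integral_congr
    intro t ht
    rw [Set.uIcc_of_le hm1, Set.mem_Icc] at ht
    unfold tent
    rw [min_eq_left (by simp; linarith), max_eq_right (by simp; linarith)]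
  have h2 : ∫ t in ((a + b) / 2)..b, tent (a, b) t = ∫ t in ((a + b) / 2)..b, (b - t) := by
    apply intervalIntegral.integral_congr
    intro t ht
    rw [Set.uIcc_of_le hm2, Set.mem_Icc] at ht
    unfold tent
    rw [min_eq_right (by simp; linarith), max_eq_right (by simp; linarith)]
  rw [h1, h2]
  rw [intervalIntegral.integral_sub intervalIntegral.intervalIntegrable_id intervalIntegrable_const,
    intervalIntegral.integral_sub intervalIntegrable_const intervalIntegral.intervalIntegrable_id]
  simp [integral_id]
  ring

lemma tent_integral (z : ℝ × ℝ) :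
    ∫ t, tent z t = (max (z.2 - z.1) 0) ^ 2 / 4 := by
  rcases le_total z.1 z.2 with h | h
  · rw [max_eq_left (by linarith)]
    have := tent_integral_le h
    simpa [tent] using this
  · rw [max_eq_right (by linarith)]
    have hz : ∀ t, tent z t = 0 := by
      intro t
      unfold tent
      rcases le_total (t - z.1) (z.2 - t) with h' | h'
      · exact max_eq_left (by rw [min_eq_left h']; linarith)
      · exact max_eq_left (by rw [min_eq_right h']; linarith)
    simp [funext hz]

lemma tent_min (x y : ℝ × ℝ) (t : ℝ) :
    min (tent x t) (tent y t) = tent (max x.1 y.1, min x.2 y.2) t := by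
  unfold tent
  rw [← max_min_distrib_left, min_min_min_comm, min_sub_sub_left, min_sub_sub_right]

/-- The `L¹` distance between the tent functions of two points of `ℝ²_≤` is half
of `d_rk`: `∫ |tent_x − tent_y| = ¼(x₂−x₁)² + ¼(y₂−y₁)² − ½ max(min(x₂,y₂) − max(x₁,y₁), 0)²`. -/
theorem stmt7 (x y : ℝ × ℝ) (hx : x.1 ≤ x.2) (hy : y.1 ≤ y.2) :
    (∫ t : ℝ, |tent x t - tent y t|) = drk x y / 2 ∧
    drk x y / 2 = (x.2 - x.1) ^ 2 / 4 + (y.2 - y.1) ^ 2 / 4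
      - (max (min x.2 y.2 - max x.1 y.1) 0) ^ 2 / 2 := by
  constructor
  · set z : ℝ × ℝ := (max x.1 y.1, min x.2 y.2) with hz
    have key : ∀ t, |tent x t - tent y t| = tent x t + tent y t - 2 * tent z t := by
      intro t
      rw [hz, ← tent_min]
      rcases le_total (tent x t) (tent y t) with h | h
      · rw [abs_of_nonpos (by linarith), min_eq_left h]; ring
      · rw [abs_of_nonneg (by linarith), min_eq_right h]; ring
    calc (∫ t : ℝ, |tent x t - tent y t|)
        = ∫ t : ℝ, (tent x t + tent y t - 2 * tent z t) := by
          exact integral_congr_ae (Filter.Eventually.of_forall key)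
      _ = (∫ t, tent x t) + (∫ t, tent y t) - 2 * ∫ t, tent z t := by
          have hxy : Integrable (fun t => tent x t + tent y t) :=
            (tent_integrable x).add (tent_integrable y)
          have hz2 : Integrable (fun t => 2 * tent z t) :=
            (tent_integrable z).const_mul 2
          rw [integral_sub hxy hz2,
            integral_add (tent_integrable x) (tent_integrable y),
            integral_const_mul]
      _ = drk x y / 2 := by
          rw [tent_integral x, tent_integral y, tent_integral z,
            max_eq_left (by linarith : (0:ℝ) ≤ x.2 - x.1),
            max_eq_left (by linarith : (0:ℝ) ≤ y.2 - y.1)]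
          unfold drk
          ring
  · unfold drk; ring
end
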